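/- Let n ∈ ℝ³ be a unit vector, β ∈ ℝ³, and A := max(1, ‖β‖). With 𝒩 := [[0_{3,3}, −V_n],[V_n, (β·n) I₃]], ℳ_D := [[0_{3,3}, V_n],[V_n, |β·n| I₃]], interface penalty S^i := A [[V_nᵀV_n, 0_{3,3}],[0_{3,3}, V_nᵀV_n]] and boundary penalty S^b := A [[0_{3,3}, 0_{3,3}],[0_{3,3}, V_nᵀV_n]], the following hold: (i) S^i is symmetric positive semidefinite and (S^i z, z) = A(‖n×b‖² + ‖n×p‖²) ≤ A ‖z‖² for all z = (b, p) ∈ ℝ⁶; (ii) Ker(ℳ_D − 𝒩) ⊆ Ker(ℳ_D + S^b − 𝒩). -/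

import Mathlib

open Matrix

/-- The cross-product matrix `V_α`, characterized by `V_α s = α × s`. -/
def crossMat (α : Fin 3 → ℝ) : Matrix (Fin 3) (Fin 3) ℝ :=
  !![0, -α 2, α 1; α 2, 0, -α 0; -α 1, α 0, 0]

lemma crossMat_mulVec (n v : Fin 3 → ℝ) : crossMat n *ᵥ v = crossProduct n v := by
  ext i
  fin_cases i <;>
    simp [crossMat, crossProduct, mulVec, dotProduct, Fin.sum_univ_succ] <;> ring

lemma quad_aux (V : Matrix (Fin 3) (Fin 3) ℝ) (v : Fin 3 → ℝ) :
    ((Vᵀ * V) *ᵥ v) ⬝ᵥ v = (V *ᵥ v) ⬝ᵥ (V *ᵥ v) := by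
  rw [← Matrix.mulVec_mulVec, Matrix.mulVec_transpose, ← Matrix.dotProduct_mulVec,
    dotProduct_comm]

lemma cross_sq_le (n v : Fin 3 → ℝ) (hn : ∑ i, n i ^ 2 = 1) :
    ∑ i, (crossProduct n v i) ^ 2 ≤ ∑ i, v i ^ 2 := by
  have h : ∑ i, (crossProduct n v i) ^ 2 + (∑ i, n i * v i) ^ 2
      = (∑ i, n i ^ 2) * (∑ i, v i ^ 2) := by
    simp [crossProduct, Fin.sum_univ_succ]; ring
  rw [hn] at h; nlinarith [sq_nonneg (∑ i, n i * v i)]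

/-- With `A = max(1, ‖β‖)`, the boundary matrices
`𝒩 = [[0, −V_n],[V_n, (β·n) I₃]]`, `ℳ_D = [[0, V_n],[V_n, |β·n| I₃]]`, interface penalty
`Sⁱ = A [[V_nᵀV_n, 0],[0, V_nᵀV_n]]` and boundary penalty `S^b = A [[0, 0],[0, V_nᵀV_n]]` for
the vector diffusion–advection–reaction problem:
(i) `Sⁱ` is symmetric positive semidefinite and
`(Sⁱ z, z) = A(‖n×b‖² + ‖n×p‖²) ≤ A ‖z‖²` for all `z = (b, p) ∈ ℝ⁶`;
(ii) `Ker(ℳ_D − 𝒩) ⊆ Ker(ℳ_D + S^b − 𝒩)`. -/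
theorem stmt18 (n β : Fin 3 → ℝ) (hn : ∑ i, n i ^ 2 = 1) :
    let A : ℝ := max 1 (Real.sqrt (∑ i, β i ^ 2))
    let N : Matrix (Fin 3 ⊕ Fin 3) (Fin 3 ⊕ Fin 3) ℝ :=
      Matrix.fromBlocks 0 (-crossMat n) (crossMat n) ((β ⬝ᵥ n) • 1)
    let MD : Matrix (Fin 3 ⊕ Fin 3) (Fin 3 ⊕ Fin 3) ℝ :=
      Matrix.fromBlocks 0 (crossMat n) (crossMat n) (|β ⬝ᵥ n| • 1)
    let Si : Matrix (Fin 3 ⊕ Fin 3) (Fin 3 ⊕ Fin 3) ℝ :=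
      A • Matrix.fromBlocks ((crossMat n)ᵀ * crossMat n) 0 0 ((crossMat n)ᵀ * crossMat n)
    let Sb : Matrix (Fin 3 ⊕ Fin 3) (Fin 3 ⊕ Fin 3) ℝ :=
      A • Matrix.fromBlocks 0 0 0 ((crossMat n)ᵀ * crossMat n)
    (Si.IsSymm ∧ Si.PosSemidef ∧
      ∀ z : Fin 3 ⊕ Fin 3 → ℝ,
        Si.mulVec z ⬝ᵥ z =
          A * ((∑ i, (crossProduct n (fun j => z (Sum.inl j)) i) ^ 2) +
            ∑ i, (crossProduct n (fun j => z (Sum.inr j)) i) ^ 2) ∧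
        Si.mulVec z ⬝ᵥ z ≤ A * ∑ i, z i ^ 2) ∧
    LinearMap.ker (MD - N).mulVecLin ≤ LinearMap.ker (MD + Sb - N).mulVecLin := by
  intro A N MD Si Sb
  have hA0 : (0:ℝ) ≤ A := le_trans zero_le_one (le_max_left _ _)
  -- key quadratic form identity
  have key : ∀ z : Fin 3 ⊕ Fin 3 → ℝ,
      Si.mulVec z ⬝ᵥ z =
        A * ((∑ i, (crossProduct n (fun j => z (Sum.inl j)) i) ^ 2) +
          ∑ i, (crossProduct n (fun j => z (Sum.inr j)) i) ^ 2) := by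
    intro z
    have hzel : z = Sum.elim (fun j => z (Sum.inl j)) (fun j => z (Sum.inr j)) := by
      funext i; cases i <;> rfl
    rw [hzel]
    show (Si *ᵥ _) ⬝ᵥ _ = _
    rw [show Si = A • Matrix.fromBlocks ((crossMat n)ᵀ * crossMat n) 0 0
        ((crossMat n)ᵀ * crossMat n) from rfl,
      smul_mulVec, fromBlocks_mulVec]
    simp only [Matrix.zero_mulVec, add_zero, zero_add, Pi.smul_apply,
      Sum.elim_comp_inl, Sum.elim_comp_inr, Sum.elim_inl, Sum.elim_inr]
    have : (Sum.elim (((crossMat n)ᵀ * crossMat n) *ᵥ fun j => z (Sum.inl j))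
          (((crossMat n)ᵀ * crossMat n) *ᵥ fun j => z (Sum.inr j))) ⬝ᵥ
        (Sum.elim (fun j => z (Sum.inl j)) (fun j => z (Sum.inr j)))
        = (((crossMat n)ᵀ * crossMat n) *ᵥ fun j => z (Sum.inl j)) ⬝ᵥ (fun j => z (Sum.inl j))
          + (((crossMat n)ᵀ * crossMat n) *ᵥ fun j => z (Sum.inr j)) ⬝ᵥ (fun j => z (Sum.inr j)) := by
      simp [dotProduct, Fintype.sum_sum_type]
    rw [smul_dotProduct, this, quad_aux, quad_aux, crossMat_mulVec, crossMat_mulVec]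
    simp only [dotProduct, sq, smul_eq_mul]
    try ring
  refine ⟨⟨?_, ?_, ?_⟩, ?_⟩
  · -- symmetry
    show Siᵀ = Si
    rw [show Si = A • Matrix.fromBlocks ((crossMat n)ᵀ * crossMat n) 0 0
        ((crossMat n)ᵀ * crossMat n) from rfl]
    rw [Matrix.transpose_smul, Matrix.fromBlocks_transpose]
    simp [Matrix.transpose_mul]
  · -- PosSemidef
    constructor
    · show Siᴴ = Si
      have hCT : Siᴴ = Siᵀ := by ext i j; simp [conjTranspose_apply]
      rw [hCT]
      show Siᵀ = Si
      rw [show Si = A • Matrix.fromBlocks ((crossMat n)ᵀ * crossMat n) 0 0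
          ((crossMat n)ᵀ * crossMat n) from rfl]
      rw [Matrix.transpose_smul, Matrix.fromBlocks_transpose]
      simp [Matrix.transpose_mul]
    · intro x
      have := key x
      have h1 : (0:ℝ) ≤ A * ((∑ i, (crossProduct n (fun j => x (Sum.inl j)) i) ^ 2) +
          ∑ i, (crossProduct n (fun j => x (Sum.inr j)) i) ^ 2) := by
        apply mul_nonneg hA0
        apply add_nonneg <;> exact Finset.sum_nonneg fun i _ => sq_nonneg _
      calc (0:ℝ) ≤ _ := h1
        _ = Si.mulVec x ⬝ᵥ x := (key x).symm
        _ = star x ⬝ᵥ Si *ᵥ x := by rw [dotProduct_comm]; rfl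
        _ = _ := by simp [dotProduct, mulVec, Finsupp.sum_fintype, Finset.mul_sum, mul_assoc, mul_add]
  · -- quadratic form and bound
    intro z
    refine ⟨key z, ?_⟩
    rw [key z]
    have hb := cross_sq_le n (fun j => z (Sum.inl j)) hn
    have hp := cross_sq_le n (fun j => z (Sum.inr j)) hn
    have hsum : ∑ i, z i ^ 2 = (∑ i, z (Sum.inl i) ^ 2) + ∑ i, z (Sum.inr i) ^ 2 := by
      simp [Fintype.sum_sum_type]
    rw [hsum]
    apply mul_le_mul_of_nonneg_left _ hA0
    exact add_le_add hb hp
  · -- kernel inclusion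
    intro z hz
    simp only [LinearMap.mem_ker, mulVecLin_apply] at hz ⊢
    set b := fun j => z (Sum.inl j) with hb
    set p := fun j => z (Sum.inr j) with hp
    have hzel : z = Sum.elim b p := by funext i; cases i <;> rfl
    -- extract V p = 0 from the top block
    have htop : crossMat n *ᵥ p = 0 := by
      funext i
      have h := congrFun hz (Sum.inl i)
      rw [hzel] at h
      rw [show MD = Matrix.fromBlocks 0 (crossMat n) (crossMat n) ((|β ⬝ᵥ n|) • 1) from rfl,
        show N = Matrix.fromBlocks 0 (-crossMat n) (crossMat n) ((β ⬝ᵥ n) • 1) from rfl] at h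
      simp only [Matrix.sub_mulVec, fromBlocks_mulVec, Sum.elim_inl, Matrix.zero_mulVec,
        zero_add, Matrix.neg_mulVec, Pi.sub_apply, Pi.neg_apply, Pi.zero_apply,
        sub_neg_eq_add, Sum.elim_comp_inl, Sum.elim_comp_inr] at h
      have h2 : (2:ℝ) * (crossMat n *ᵥ p) i = 0 := by linarith
      simpa using h2
    have hVtVp : ((crossMat n)ᵀ * crossMat n) *ᵥ p = 0 := by
      rw [← Matrix.mulVec_mulVec, htop, Matrix.mulVec_zero]
    have hsplit : MD + Sb - N = (MD - N) + Sb := by abel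
    rw [hsplit, Matrix.add_mulVec, hz, zero_add, hzel,
      show Sb = A • Matrix.fromBlocks 0 0 0 ((crossMat n)ᵀ * crossMat n) from rfl,
      smul_mulVec, fromBlocks_mulVec]
    simp [hVtVp]
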